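/- arXiv:2603.24999 — 5 statements merged into one kernel-verified Lean document; each statement's English description precedes it below -/
import Mathlib

section
/- For every natural number n ≥ 1 and data vectors x, y : Fin n → ℝ, the infimum over all non-decreasing functions f : ℝ → ℝ of the sum of squared errors SSE(f) = ∑_{r} (y r − f (x r))² is attained: there exists a non-decreasing function f̂ : ℝ → ℝ such that SSE(f̂) ≤ SSE(g) for every non-decreasing g : ℝ → ℝ. -/
noncomputable def sse {n : ℕ} (x y : Fin n → ℝ) (f : ℝ → ℝ) : ℝ :=
  ∑ r, (y r - f (x r)) ^ 2

/-- The infimum of the isotonic-regression sum of squared errors is attained: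
there is a non-decreasing `f̂` whose SSE is at most that of every non-decreasing `g`. -/
theorem isotonic_regression_exists (n : ℕ) (hn : 1 ≤ n) (x y : Fin n → ℝ) :
    ∃ fhat : ℝ → ℝ, Monotone fhat ∧
      ∀ g : ℝ → ℝ, Monotone g → sse x y fhat ≤ sse x y g := by
  haveI : NeZero n := ⟨by omega⟩
  set E := EuclideanSpace ℝ (Fin n)
  set K : Set E := {v | ∀ r s : Fin n, x r ≤ x s → v r ≤ v s} with hK
  have hKne : K.Nonempty := ⟨0, fun r s _ => le_refl _⟩
  have hKclosed : IsClosed K := by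
    have : K = ⋂ (r : Fin n) (s : Fin n) (_ : x r ≤ x s), {v : E | v r ≤ v s} := by
      ext v; simp [hK, Set.mem_iInter]
    rw [this]
    exact isClosed_iInter fun r => isClosed_iInter fun s => isClosed_iInter fun _ =>
      isClosed_le ((continuous_apply r).comp (PiLp.continuous_ofLp 2 fun _ : Fin n => ℝ)) ((continuous_apply s).comp (PiLp.continuous_ofLp 2 fun _ : Fin n => ℝ))
  have hKconv : Convex ℝ K := by
    intro u hu v hv a b ha hb hab r s hrs
    have h1 := hu r s hrs
    have h2 := hv r s hrs
    show a * u r + b * v r ≤ a * u s + b * v s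
    nlinarith
  have hKcomp : IsComplete K := hKclosed.isComplete
  set Y : E := WithLp.toLp 2 (fun r => y r) with hY
  obtain ⟨vh, hvhK, hproj⟩ := exists_norm_eq_iInf_of_complete_convex hKne hKcomp hKconv Y
  -- build fhat from the vector vh
  have huniv : (Finset.univ : Finset (Fin n)).Nonempty := Finset.univ_nonempty
  set fhat : ℝ → ℝ := fun t =>
    if h : (Finset.univ.filter (fun r => x r ≤ t)).Nonempty
    then (Finset.univ.filter (fun r => x r ≤ t)).sup' h vh
    else Finset.univ.inf' huniv vh with hfhat
  have hmono : Monotone fhat := by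
    intro t t' htt'
    have hsub : (Finset.univ.filter (fun r => x r ≤ t)) ⊆
        (Finset.univ.filter (fun r => x r ≤ t')) := by
      intro r hr
      simp only [Finset.mem_filter, Finset.mem_univ, true_and] at hr ⊢
      exact hr.trans htt'
    simp only [hfhat]
    by_cases h1 : (Finset.univ.filter (fun r => x r ≤ t)).Nonempty
    · have h2 : (Finset.univ.filter (fun r => x r ≤ t')).Nonempty :=
        h1.mono hsub
      rw [dif_pos h1, dif_pos h2]
      exact Finset.sup'_mono vh hsub h1
    · rw [dif_neg h1]
      by_cases h2 : (Finset.univ.filter (fun r => x r ≤ t')).Nonempty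
      · rw [dif_pos h2]
        obtain ⟨r, hr⟩ := h2
        calc Finset.univ.inf' huniv vh ≤ vh r := Finset.inf'_le vh (Finset.mem_univ r)
          _ ≤ _ := Finset.le_sup' vh hr
      · rw [dif_neg h2]
  have hval : ∀ s : Fin n, fhat (x s) = vh s := by
    intro s
    have hs : s ∈ Finset.univ.filter (fun r => x r ≤ x s) := by simp
    have hne : (Finset.univ.filter (fun r => x r ≤ x s)).Nonempty := ⟨s, hs⟩
    simp only [hfhat, dif_pos hne]
    apply le_antisymm
    · apply Finset.sup'_le
      intro r hr
      simp only [Finset.mem_filter, Finset.mem_univ, true_and] at hr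
      exact hvhK r s hr
    · exact Finset.le_sup' vh hs
  refine ⟨fhat, hmono, fun g hg => ?_⟩
  set w : E := WithLp.toLp 2 (fun r => g (x r)) with hw
  have hwK : w ∈ K := fun r s hrs => hg hrs
  have hle : ‖Y - vh‖ ≤ ‖Y - w‖ := by
    rw [hproj]
    exact ciInf_le ⟨0, fun z hz => by obtain ⟨u, rfl⟩ := hz; positivity⟩ (⟨w, hwK⟩ : K)
  have hnorm : ∀ v : E, (v ∈ K) → ‖Y - v‖ ^ 2 = ∑ r, (y r - v r) ^ 2 := by
    intro v _
    rw [EuclideanSpace.norm_eq, Real.sq_sqrt (Finset.sum_nonneg fun i _ => by positivity)]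
    congr 1; ext r
    simp [Real.norm_eq_abs, sq_abs, hY]
    rfl
  have key : ∑ r, (y r - vh r) ^ 2 ≤ ∑ r, (y r - w r) ^ 2 := by
    rw [← hnorm vh hvhK, ← hnorm w hwK]
    exact pow_le_pow_left₀ (norm_nonneg _) hle 2
  calc sse x y fhat = ∑ r, (y r - vh r) ^ 2 := by
        unfold sse; congr 1; ext r; rw [hval r]
    _ ≤ ∑ r, (y r - w r) ^ 2 := key
    _ = sse x y g := rfl
end

section
/- Let n ≥ 1 and x, y : Fin n → ℝ with SST(x) > 0 and SST(y) > 0, and suppose the sample covariance ∑_{r} (x r − x̄)(y r − ȳ) is nonnegative. Let r denote the sample Pearson correlation of x and y. Then the infimum over non-decreasing f : ℝ → ℝ of SSE(f) is at most (1 − r²) · SST(y); equivalently, the isotonic R² is at least the squared Pearson correlation: R²_iso ≥ r². (The ordinary least-squares affine fit has nonnegative slope and is therefore itself a monotone predictor.) -/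
/-- Mean of a data vector. -/
noncomputable def mean {n : ℕ} (y : Fin n → ℝ) : ℝ := (1 / n) * ∑ r, y r

/-- Total sum of squares of a data vector. -/
noncomputable def sst {n : ℕ} (y : Fin n → ℝ) : ℝ := ∑ r, (y r - mean y) ^ 2

/-- Sample covariance sum. -/
noncomputable def covSum {n : ℕ} (x y : Fin n → ℝ) : ℝ :=
  ∑ r, (x r - mean x) * (y r - mean y)

/-- Sample Pearson correlation. -/
noncomputable def pearson {n : ℕ} (x y : Fin n → ℝ) : ℝ :=
  covSum x y / Real.sqrt (sst x * sst y)

/-- Minimal sum of squared errors over all non-decreasing predictors. -/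
noncomputable def isoSSE {n : ℕ} (x y : Fin n → ℝ) : ℝ :=
  sInf {e : ℝ | ∃ f : ℝ → ℝ, Monotone f ∧ e = sse x y f}

/-- The isotonic coefficient of determination. -/
noncomputable def isoR2 {n : ℕ} (x y : Fin n → ℝ) : ℝ := 1 - isoSSE x y / sst y

/-- If the sample covariance is nonnegative, the minimal monotone SSE is at most
`(1 - r²)·SST(y)`; equivalently, the isotonic `R²` is at least the squared Pearson
correlation. -/
theorem isoR2_ge_pearson_sq (n : ℕ) (hn : 1 ≤ n) (x y : Fin n → ℝ)
    (hSSTx : 0 < sst x) (hSSTy : 0 < sst y) (hcov : 0 ≤ covSum x y) :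
    isoSSE x y ≤ (1 - pearson x y ^ 2) * sst y ∧ pearson x y ^ 2 ≤ isoR2 x y := by
  set b := covSum x y / sst x with hbdef
  have hb : 0 ≤ b := div_nonneg hcov hSSTx.le
  have hmono : Monotone (fun t => mean y + b * (t - mean x)) := by
    intro a c hac
    have := mul_le_mul_of_nonneg_left (sub_le_sub_right hac (mean x)) hb
    simpa using add_le_add_left this (mean y)
  have hbdd : BddBelow {e : ℝ | ∃ f : ℝ → ℝ, Monotone f ∧ e = sse x y f} := by
    refine ⟨0, ?_⟩
    rintro e ⟨f, -, rfl⟩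
    exact Finset.sum_nonneg fun r _ => sq_nonneg _
  have hval : sse x y (fun t => mean y + b * (t - mean x))
      = sst y - covSum x y ^ 2 / sst x := by
    have hexp : ∀ r : Fin n, (y r - (mean y + b * (x r - mean x))) ^ 2
        = (y r - mean y) ^ 2 - (2 * b) * ((x r - mean x) * (y r - mean y))
          + b ^ 2 * (x r - mean x) ^ 2 := fun r => by ring
    unfold sse
    simp_rw [hexp, Finset.sum_add_distrib, Finset.sum_sub_distrib, ← Finset.mul_sum]
    have h1 : ∑ r, (y r - mean y) ^ 2 = sst y := rfl
    have h2 : ∑ r, (x r - mean x) * (y r - mean y) = covSum x y := rfl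
    have h3 : ∑ r, (x r - mean x) ^ 2 = sst x := rfl
    rw [h1, h2, h3, hbdef]
    field_simp
    ring
  have hp2 : pearson x y ^ 2 = covSum x y ^ 2 / (sst x * sst y) := by
    unfold pearson
    rw [div_pow, Real.sq_sqrt (by positivity)]
  have hrhs : (1 - pearson x y ^ 2) * sst y = sst y - covSum x y ^ 2 / sst x := by
    rw [hp2]; field_simp
  have hle : isoSSE x y ≤ (1 - pearson x y ^ 2) * sst y := by
    rw [hrhs, ← hval]
    exact csInf_le hbdd ⟨_, hmono, rfl⟩
  refine ⟨hle, ?_⟩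
  unfold isoR2
  rw [le_sub_iff_add_le, ← le_sub_iff_add_le', div_le_iff₀ hSSTy]
  exact hle
end

section
/- Let n ≥ 1, y ∈ EuclideanSpace ℝ (Fin n), let ŷ be the metric projection of y onto the monotone cone K = { v | r ≤ s implies v r ≤ v s }, and let ȳ = (1/n) ∑_{r} y r. Then the total sum of squares decomposes as SST(y) = ∑_{r} (y r − ŷ r)² + ∑_{r} (ŷ r − ȳ)², where SST(y) = ∑_{r} (y r − ȳ)²; consequently, when SST(y) > 0 the isotonic R² equals the explained-variance ratio: 1 − (∑_{r} (y r − ŷ r)²)/SST(y) = (∑_{r} (ŷ r − ȳ)²)/SST(y). -/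
open scoped RealInnerProductSpace

set_option maxHeartbeats 1000000


/-- Sum-of-squares decomposition for the isotonic fit: `SST(y)` splits into the residual
sum of squares plus the explained sum of squares; hence when `SST(y) > 0`, the isotonic
`R²` equals the explained-variance ratio. -/
theorem isotonic_sst_decomposition (n : ℕ) (hn : 1 ≤ n)
    (y yhat : EuclideanSpace ℝ (Fin n))
    (hK : yhat ∈ {v : EuclideanSpace ℝ (Fin n) | ∀ r s : Fin n, r ≤ s → v r ≤ v s})
    (hmin : ∀ u ∈ {v : EuclideanSpace ℝ (Fin n) | ∀ r s : Fin n, r ≤ s → v r ≤ v s},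
      ‖y - yhat‖ ≤ ‖y - u‖)
    (ybar : ℝ) (hybar : ybar = (1 / n) * ∑ r, y r) :
    (∑ r, (y r - ybar) ^ 2) =
        (∑ r, (y r - yhat r) ^ 2) + (∑ r, (yhat r - ybar) ^ 2) ∧
      (0 < ∑ r, (y r - ybar) ^ 2 →
        1 - (∑ r, (y r - yhat r) ^ 2) / (∑ r, (y r - ybar) ^ 2) =
          (∑ r, (yhat r - ybar) ^ 2) / (∑ r, (y r - ybar) ^ 2)) := by
  set K : Set (EuclideanSpace ℝ (Fin n)) :=
    {v : EuclideanSpace ℝ (Fin n) | ∀ r s : Fin n, r ≤ s → v r ≤ v s} with hKdef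
  have hconv : Convex ℝ K := by
    intro a ha b hb p q hp hq hpq r s hrs
    have : p • a + q • b ∈ K := by
      intro r s hrs
      simp only [PiLp.add_apply, PiLp.smul_apply, smul_eq_mul]
      exact add_le_add (mul_le_mul_of_nonneg_left (ha r s hrs) hp)
        (mul_le_mul_of_nonneg_left (hb r s hrs) hq)
    exact this r s hrs
  haveI : Nonempty K := ⟨⟨yhat, hK⟩⟩
  have hinf : ‖y - yhat‖ = ⨅ w : K, ‖y - w‖ := by
    refine le_antisymm (le_ciInf fun w => hmin w w.2) ?_
    have hbdd : BddBelow (Set.range fun w : K => ‖y - (w : EuclideanSpace ℝ (Fin n))‖) := by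
      refine ⟨0, ?_⟩
      rintro _ ⟨w, rfl⟩
      exact norm_nonneg _
    exact ciInf_le hbdd ⟨yhat, hK⟩
  have hVI : ∀ w ∈ K, (inner ℝ (y - yhat) (w - yhat) : ℝ) ≤ 0 :=
    (norm_eq_iInf_iff_real_inner_le_zero hconv hK).mp hinf
  let c1 : EuclideanSpace ℝ (Fin n) := WithLp.toLp 2 (fun _ => (1 : ℝ))
  have hc1p : yhat + c1 ∈ K := fun r s hrs => by
    simpa [c1, PiLp.add_apply] using hK r s hrs
  have hc1m : yhat - c1 ∈ K := fun r s hrs => by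
    simp only [PiLp.sub_apply, c1, PiLp.toLp_apply]
    exact sub_le_sub_right (hK r s hrs) 1
  have h2y : (2 : ℝ) • yhat ∈ K := fun r s hrs => by
    simp only [PiLp.smul_apply, smul_eq_mul]
    linarith [hK r s hrs]
  have h0 : (0 : EuclideanSpace ℝ (Fin n)) ∈ K := fun r s _ => le_refl _
  have e1 : ∑ r, (y r - yhat r) = 0 := by
    have hp := hVI _ hc1p
    have hm := hVI _ hc1m
    rw [add_sub_cancel_left] at hp
    have hmm : (yhat - c1) - yhat = -c1 := by abel
    rw [hmm, inner_neg_right] at hm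
    have h0' : (inner ℝ (y - yhat) (c1) : ℝ) = 0 := le_antisymm hp (by linarith)
    have : (inner ℝ (y - yhat) (c1) : ℝ) = ∑ r, (y r - yhat r) := by
      simp [PiLp.inner_apply, c1, RCLike.inner_apply]
    linarith [this ▸ h0']
  have e2 : ∑ r, (y r - yhat r) * yhat r = 0 := by
    have hp := hVI _ h2y
    have hm := hVI _ h0
    have h2 : (2 : ℝ) • yhat - yhat = yhat := by
      rw [two_smul]; abel
    rw [h2] at hp
    rw [zero_sub, inner_neg_right] at hm
    have h0' : (inner ℝ (y - yhat) (yhat) : ℝ) = 0 := le_antisymm hp (by linarith)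
    have : (inner ℝ (y - yhat) (yhat) : ℝ) = ∑ r, (y r - yhat r) * yhat r := by
      simp [PiLp.inner_apply, RCLike.inner_apply, mul_comm]
    linarith [this ▸ h0']
  have hdecomp : (∑ r, (y r - ybar) ^ 2) =
      (∑ r, (y r - yhat r) ^ 2) + (∑ r, (yhat r - ybar) ^ 2) := by
    have key : ∑ r, (y r - ybar) ^ 2 -
        (∑ r, (y r - yhat r) ^ 2 + ∑ r, (yhat r - ybar) ^ 2) =
        2 * (∑ r, (y r - yhat r) * yhat r) - 2 * ybar * ∑ r, (y r - yhat r) := by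
      rw [Finset.mul_sum, Finset.mul_sum, ← Finset.sum_sub_distrib,
        ← Finset.sum_add_distrib, ← Finset.sum_sub_distrib]
      exact Finset.sum_congr rfl fun r _ => by ring
    rw [e1, e2] at key
    linarith
  refine ⟨hdecomp, fun hpos => ?_⟩
  field_simp
  linarith [hdecomp]
end

section
/- (Min–max characterization of isotonic regression / correctness of PAVA output.) Let n ≥ 1, y : Fin n → ℝ, and let ŷ be the metric projection of y onto the monotone cone K = { v | r ≤ s implies v r ≤ v s } in EuclideanSpace ℝ (Fin n). Then for every index k, ŷ k = max over s ≤ k of ( min over t ≥ k of Avg(y; s, t) ), where Avg(y; s, t) = (∑_{r = s}^{t} y r)/(t − s + 1) is the average of y over the index block from s to t. -/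
open Finset

/-- Block average of `y` over the index block from `s` to `t`. -/
noncomputable def blockAvg {n : ℕ} (y : Fin n → ℝ) (s t : Fin n) : ℝ :=
  (∑ r ∈ Finset.Icc s t, y r) / (((t : ℕ) - (s : ℕ) + 1 : ℕ) : ℝ)

section Aux
variable {n : ℕ}



lemma key_inner_le (y yhat : EuclideanSpace ℝ (Fin n))
    (hmin : ∀ u ∈ {v : EuclideanSpace ℝ (Fin n) | ∀ r s : Fin n, r ≤ s → v r ≤ v s},
      ‖y - yhat‖ ≤ ‖y - u‖)
    (w : EuclideanSpace ℝ (Fin n)) (ε₀ : ℝ) (hε₀ : 0 < ε₀)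
    (hw : ∀ ε : ℝ, 0 < ε → ε ≤ ε₀ →
      yhat + ε • w ∈ {v : EuclideanSpace ℝ (Fin n) | ∀ r s : Fin n, r ≤ s → v r ≤ v s}) :
    (inner ℝ (y - yhat) w : ℝ) ≤ 0 := by
  have hstep : ∀ ε : ℝ, 0 < ε → ε ≤ ε₀ →
      (inner ℝ (y - yhat) w : ℝ) ≤ ε * ‖w‖ ^ 2 / 2 := by
    intro ε hε hεε
    have h1 := hmin _ (hw ε hε hεε)
    have h2 : ‖y - yhat‖ ^ 2 ≤ ‖(y - yhat) - ε • w‖ ^ 2 := by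
      have h3 : y - (yhat + ε • w) = (y - yhat) - ε • w := by abel
      rw [← h3]
      exact pow_le_pow_left₀ (norm_nonneg _) h1 2
    have h4 : ‖(y - yhat) - ε • w‖ ^ 2
        = ‖y - yhat‖ ^ 2 - 2 * (ε * inner ℝ (y - yhat) w) + ε ^ 2 * ‖w‖ ^ 2 := by
      rw [norm_sub_sq_real, real_inner_smul_right, norm_smul, Real.norm_eq_abs,
        abs_of_pos hε, mul_pow]
    rw [h4] at h2
    nlinarith [h2]
  by_contra hc
  push_neg at hc
  set c : ℝ := inner ℝ (y - yhat) w with hcdef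
  have hwpos : (0:ℝ) < ‖w‖ ^ 2 + 1 := by positivity
  have hε : 0 < min ε₀ (c / (‖w‖ ^ 2 + 1)) := lt_min hε₀ (by positivity)
  have h4 := hstep _ hε (min_le_left _ _)
  have h3 : min ε₀ (c / (‖w‖ ^ 2 + 1)) ≤ c / (‖w‖ ^ 2 + 1) := min_le_right _ _
  have h5 : c / (‖w‖ ^ 2 + 1) * (‖w‖ ^ 2 + 1) = c := div_mul_cancel₀ _ (ne_of_gt hwpos)
  nlinarith [sq_nonneg ‖w‖, hε, h3, h4, h5]




noncomputable def tailInd (j : Fin n) : EuclideanSpace ℝ (Fin n) :=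
  WithLp.toLp 2 (fun r => if j ≤ r then 1 else 0)

lemma inner_tailInd (g : EuclideanSpace ℝ (Fin n)) (j : Fin n) :
    (inner ℝ g (tailInd j) : ℝ) = ∑ r ∈ Finset.Ici j, g r := by
  have h : (inner ℝ g (tailInd j) : ℝ) = ∑ r : Fin n, g r * (if j ≤ r then 1 else 0) := by
    simp [PiLp.inner_apply, RCLike.inner_apply, tailInd]
  rw [h]
  simp only [mul_ite, mul_one, mul_zero]
  rw [← Finset.sum_filter]
  congr 1
  ext r
  simp

lemma inner_neg_tailInd (g : EuclideanSpace ℝ (Fin n)) (j : Fin n) :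
    (inner ℝ g (-tailInd j) : ℝ) = -∑ r ∈ Finset.Ici j, g r := by
  rw [inner_neg_right, inner_tailInd]


variable (y yhat : EuclideanSpace ℝ (Fin n))
variable (hK : yhat ∈ {v : EuclideanSpace ℝ (Fin n) | ∀ r s : Fin n, r ≤ s → v r ≤ v s})
variable (hmin : ∀ u ∈ {v : EuclideanSpace ℝ (Fin n) | ∀ r s : Fin n, r ≤ s → v r ≤ v s},
      ‖y - yhat‖ ≤ ‖y - u‖)

include hK hmin

lemma T_le (j : Fin n) : ∑ r ∈ Finset.Ici j, (y r - yhat r) ≤ 0 := by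
  have h := key_inner_le y yhat hmin (tailInd j) 1 one_pos ?_
  · rw [inner_tailInd] at h
    calc ∑ r ∈ Finset.Ici j, (y r - yhat r)
        = ∑ r ∈ Finset.Ici j, (y - yhat) r := by
          apply Finset.sum_congr rfl; intro r _; simp [PiLp.sub_apply]
      _ ≤ 0 := h
  · intro ε hε _
    intro r s hrs
    simp only [PiLp.add_apply, PiLp.smul_apply, smul_eq_mul, tailInd]
    have h1 := hK r s hrs
    by_cases hr : j ≤ r
    · have hs : j ≤ s := hr.trans hrs
      simp [hr, hs]; linarith
    · by_cases hs : j ≤ s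
      · simp [hr, hs]; nlinarith
      · simp [hr, hs]; linarith

lemma T_ge (j : Fin n) (hj : ∀ r : Fin n, r < j → yhat r < yhat j) :
    0 ≤ ∑ r ∈ Finset.Ici j, (y r - yhat r) := by
  -- choose ε₀
  set ε₀ : ℝ := if h' : (Finset.Iio j).Nonempty then yhat j - (Finset.Iio j).sup' h' yhat else 1
    with hε₀def
  have hε₀pos : 0 < ε₀ := by
    rw [hε₀def]
    split_ifs with h'
    · obtain ⟨m, hm, hms⟩ := Finset.exists_mem_eq_sup' h' yhat
      rw [hms]
      have := hj m (Finset.mem_Iio.mp hm)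
      linarith
    · exact one_pos
  have hgap : ∀ r : Fin n, r < j → yhat r ≤ yhat j - ε₀ := by
    intro r hr
    have h' : (Finset.Iio j).Nonempty := ⟨r, Finset.mem_Iio.mpr hr⟩
    rw [hε₀def, dif_pos h']
    have := Finset.le_sup' yhat (Finset.mem_Iio.mpr hr)
    linarith
  have h := key_inner_le y yhat hmin (-tailInd j) ε₀ hε₀pos ?_
  · rw [inner_neg_tailInd] at h
    have h2 : 0 ≤ ∑ r ∈ Finset.Ici j, (y - yhat) r := by linarith
    calc (0:ℝ) ≤ ∑ r ∈ Finset.Ici j, (y - yhat) r := h2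
      _ = ∑ r ∈ Finset.Ici j, (y r - yhat r) := by
          apply Finset.sum_congr rfl; intro r _; simp [PiLp.sub_apply]
  · intro ε hε hεε
    intro r s hrs
    simp only [PiLp.add_apply, PiLp.smul_apply, PiLp.neg_apply, smul_eq_mul, tailInd]
    have h1 := hK r s hrs
    by_cases hr : j ≤ r
    · have hs : j ≤ s := hr.trans hrs
      simp [hr, hs]; linarith
    · by_cases hs : j ≤ s
      · have hrj : r < j := lt_of_not_ge hr
        have h3 := hgap r hrj
        have h4 := hK j s hs
        simp [hr, hs]
        nlinarith
      · simp [hr, hs]; linarith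

lemma S_le (t : Fin n) : ∑ r ∈ Finset.Ioi t, (y r - yhat r) ≤ 0 := by
  rcases Finset.eq_empty_or_nonempty (Finset.Ioi t) with h | h
  · simp [h]
  · have heq : Finset.Ioi t = Finset.Ici ((Finset.Ioi t).min' h) := by
      ext r
      simp only [Finset.mem_Ioi, Finset.mem_Ici]
      constructor
      · intro hr; exact Finset.min'_le _ _ (Finset.mem_Ioi.mpr hr)
      · intro hr
        have := Finset.mem_Ioi.mp (Finset.min'_mem _ h)
        exact this.trans_le hr
    rw [heq]
    exact T_le y yhat hK hmin _

lemma S_eq (t : Fin n) (ht : ∀ r : Fin n, t < r → yhat t < yhat r) :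
    ∑ r ∈ Finset.Ioi t, (y r - yhat r) = 0 := by
  rcases Finset.eq_empty_or_nonempty (Finset.Ioi t) with h | h
  · simp [h]
  · set t' := (Finset.Ioi t).min' h with ht'
    have htt' : t < t' := Finset.mem_Ioi.mp (Finset.min'_mem _ h)
    have heq : Finset.Ioi t = Finset.Ici t' := by
      ext r
      simp only [Finset.mem_Ioi, Finset.mem_Ici]
      constructor
      · intro hr; exact Finset.min'_le _ _ (Finset.mem_Ioi.mpr hr)
      · intro hr; exact htt'.trans_le hr
    rw [heq]
    refine le_antisymm (T_le y yhat hK hmin _) (T_ge y yhat hK hmin _ ?_)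
    intro r hr
    have hrt : r ≤ t := by
      by_contra hc
      exact absurd (Finset.min'_le _ _ (Finset.mem_Ioi.mpr (lt_of_not_ge hc))) (not_le.mpr hr)
    calc yhat r ≤ yhat t := hK r t hrt
      _ < yhat t' := ht t' htt'

lemma block_sum_eq (s t : Fin n) (hst : s ≤ t) :
    ∑ r ∈ Finset.Icc s t, (y r - yhat r)
      = ∑ r ∈ Finset.Ici s, (y r - yhat r) - ∑ r ∈ Finset.Ioi t, (y r - yhat r) := by
  have hsplit : Finset.Ici s = Finset.Icc s t ∪ Finset.Ioi t := by
    ext r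
    simp only [Finset.mem_Ici, Finset.mem_union, Finset.mem_Icc, Finset.mem_Ioi]
    constructor
    · intro hr
      rcases le_or_gt r t with h | h
      · exact Or.inl ⟨hr, h⟩
      · exact Or.inr h
    · rintro (⟨h1, _⟩ | h1)
      · exact h1
      · exact hst.trans h1.le
  have hdisj : Disjoint (Finset.Icc s t) (Finset.Ioi t) := by
    rw [Finset.disjoint_left]
    intro r hr hr'
    exact absurd (Finset.mem_Icc.mp hr).2 (not_le.mpr (Finset.mem_Ioi.mp hr'))
  rw [hsplit, Finset.sum_union hdisj]
  ring

lemma avg_ge (s t k : Fin n) (hs : ∀ r : Fin n, r < s → yhat r < yhat s)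
    (hsk : s ≤ k) (hsval : yhat s = yhat k) (hkt : k ≤ t) :
    yhat k ≤ blockAvg (fun r => y r) s t := by
  have hst : s ≤ t := hsk.trans hkt
  have hTs : ∑ r ∈ Finset.Ici s, (y r - yhat r) = 0 :=
    le_antisymm (T_le y yhat hK hmin s) (T_ge y yhat hK hmin s hs)
  have hSt := S_le y yhat hK hmin t
  have hg : 0 ≤ ∑ r ∈ Finset.Icc s t, (y r - yhat r) := by
    rw [block_sum_eq y yhat hK hmin s t hst, hTs]
    linarith
  have hcard : (Finset.Icc s t).card = (t : ℕ) - (s : ℕ) + 1 := by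
    rw [Fin.card_Icc]
    omega
  have hstn : (s : ℕ) ≤ (t : ℕ) := hst
  have hyhat : (Finset.Icc s t).card • yhat k ≤ ∑ r ∈ Finset.Icc s t, yhat r := by
    apply Finset.card_nsmul_le_sum
    intro r hr
    calc yhat k = yhat s := hsval.symm
      _ ≤ yhat r := hK s r (Finset.mem_Icc.mp hr).1
  have hsum : ∑ r ∈ Finset.Icc s t, y r
      = ∑ r ∈ Finset.Icc s t, yhat r + ∑ r ∈ Finset.Icc s t, (y r - yhat r) := by
    rw [← Finset.sum_add_distrib]
    apply Finset.sum_congr rfl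
    intro r _
    ring
  rw [blockAvg, le_div_iff₀ (by positivity)]
  rw [hsum]
  rw [nsmul_eq_mul, hcard] at hyhat
  have : (((t : ℕ) - (s : ℕ) + 1 : ℕ) : ℝ) = ((t : ℕ) - (s : ℕ) + 1 : ℕ) := rfl
  push_cast at hyhat ⊢
  nlinarith [hyhat, hg]

lemma avg_le (s t k : Fin n) (ht : ∀ r : Fin n, t < r → yhat t < yhat r)
    (hkt : k ≤ t) (htval : yhat t = yhat k) (hsk : s ≤ k) :
    blockAvg (fun r => y r) s t ≤ yhat k := by
  have hst : s ≤ t := hsk.trans hkt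
  have hSt : ∑ r ∈ Finset.Ioi t, (y r - yhat r) = 0 := S_eq y yhat hK hmin t ht
  have hTs := T_le y yhat hK hmin s
  have hg : ∑ r ∈ Finset.Icc s t, (y r - yhat r) ≤ 0 := by
    rw [block_sum_eq y yhat hK hmin s t hst, hSt]
    linarith
  have hcard : (Finset.Icc s t).card = (t : ℕ) - (s : ℕ) + 1 := by
    rw [Fin.card_Icc]
    have hstn : (s : ℕ) ≤ (t : ℕ) := hst
    omega
  have hyhat : ∑ r ∈ Finset.Icc s t, yhat r ≤ (Finset.Icc s t).card • yhat k := by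
    apply Finset.sum_le_card_nsmul
    intro r hr
    calc yhat r ≤ yhat t := hK r t (Finset.mem_Icc.mp hr).2
      _ = yhat k := htval
  have hsum : ∑ r ∈ Finset.Icc s t, y r
      = ∑ r ∈ Finset.Icc s t, yhat r + ∑ r ∈ Finset.Icc s t, (y r - yhat r) := by
    rw [← Finset.sum_add_distrib]
    apply Finset.sum_congr rfl
    intro r _
    ring
  rw [blockAvg, div_le_iff₀ (by positivity)]
  rw [hsum]
  rw [nsmul_eq_mul, hcard] at hyhat
  push_cast at hyhat ⊢
  nlinarith [hyhat, hg]

end Aux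

/-- Min–max characterization of isotonic regression (correctness of PAVA): each fitted
value is `max_{s ≤ k} min_{t ≥ k}` of the block average of `y` from `s` to `t`. -/
theorem isotonic_minmax_formula (n : ℕ) (hn : 1 ≤ n)
    (y yhat : EuclideanSpace ℝ (Fin n))
    (hK : yhat ∈ {v : EuclideanSpace ℝ (Fin n) | ∀ r s : Fin n, r ≤ s → v r ≤ v s})
    (hmin : ∀ u ∈ {v : EuclideanSpace ℝ (Fin n) | ∀ r s : Fin n, r ≤ s → v r ≤ v s},
      ‖y - yhat‖ ≤ ‖y - u‖) (k : Fin n) :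
    yhat k =
      (Finset.Iic k).sup' ⟨k, Finset.mem_Iic.mpr le_rfl⟩ (fun s =>
        (Finset.Ici k).inf' ⟨k, Finset.mem_Ici.mpr le_rfl⟩ (fun t =>
          blockAvg (fun r => y r) s t)) := by
  set A : Finset (Fin n) := Finset.univ.filter (fun r => yhat r = yhat k) with hA
  have hAne : A.Nonempty := ⟨k, by simp [hA]⟩
  set s₀ : Fin n := A.min' hAne with hs₀
  set t₀ : Fin n := A.max' hAne with ht₀
  have hs₀mem : yhat s₀ = yhat k := by
    have h2 : s₀ ∈ A := A.min'_mem hAne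
    rw [hA, Finset.mem_filter] at h2
    exact h2.2
  have ht₀mem : yhat t₀ = yhat k := by
    have h2 : t₀ ∈ A := A.max'_mem hAne
    rw [hA, Finset.mem_filter] at h2
    exact h2.2
  have hs₀k : s₀ ≤ k := A.min'_le k (by simp [hA])
  have hkt₀ : k ≤ t₀ := A.le_max' k (by simp [hA])
  have hs : ∀ r : Fin n, r < s₀ → yhat r < yhat s₀ := by
    intro r hr
    refine lt_of_le_of_ne (hK r s₀ hr.le) ?_
    intro he
    have : r ∈ A := by
      rw [hA]
      simp only [Finset.mem_filter, Finset.mem_univ, true_and]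
      rw [he, hs₀mem]
    exact absurd (A.min'_le r this) (not_le.mpr hr)
  have ht : ∀ r : Fin n, t₀ < r → yhat t₀ < yhat r := by
    intro r hr
    refine lt_of_le_of_ne (hK t₀ r hr.le) ?_
    intro he
    have : r ∈ A := by
      rw [hA]
      simp only [Finset.mem_filter, Finset.mem_univ, true_and]
      rw [← he, ht₀mem]
    exact absurd (A.le_max' r this) (not_le.mpr hr)
  apply le_antisymm
  · apply Finset.le_sup'_of_le _ (Finset.mem_Iic.mpr hs₀k)
    apply Finset.le_inf'
    intro t htmem
    exact avg_ge y yhat hK hmin s₀ t k hs hs₀k hs₀mem (Finset.mem_Ici.mp htmem)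
  · apply Finset.sup'_le
    intro s hsmem
    apply Finset.inf'_le_of_le _ (Finset.mem_Ici.mpr hkt₀)
    exact avg_le y yhat hK hmin s t₀ k ht hkt₀ ht₀mem (Finset.mem_Iic.mp hsmem)
end

section
/- Let n ≥ 1 and x, y : Fin n → ℝ. Suppose y r = g (x r) for all r, where g : ℝ → ℝ is strictly decreasing (strictly antitone), and suppose x is non-constant. Then: (i) the infimum over non-increasing f : ℝ → ℝ of ∑_{r} (y r − f (x r))² equals 0; (ii) the infimum over non-decreasing f : ℝ → ℝ of ∑_{r} (y r − f (x r))² is strictly positive; consequently the signed monotone coefficient S², defined as +1·(1 − MSE↑/SST(y)) when MSE↑ ≤ MSE↓ and −1·(1 − MSE↓/SST(y)) otherwise, equals −1. (A perfectly inverted relationship, as produced by a miskeyed item, yields signed coefficient −1.) -/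
/-- Minimal SSE over non-decreasing predictors. -/
noncomputable def mseUp {n : ℕ} (x y : Fin n → ℝ) : ℝ :=
  sInf {e : ℝ | ∃ f : ℝ → ℝ, Monotone f ∧ e = sse x y f}

/-- Minimal SSE over non-increasing predictors. -/
noncomputable def mseDown {n : ℕ} (x y : Fin n → ℝ) : ℝ :=
  sInf {e : ℝ | ∃ f : ℝ → ℝ, Antitone f ∧ e = sse x y f}

/-- The signed monotone coefficient. -/
noncomputable def signedS2 {n : ℕ} (x y : Fin n → ℝ) : ℝ :=
  if mseUp x y ≤ mseDown x y then 1 - mseUp x y / sst y else -(1 - mseDown x y / sst y)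

lemma sse_nonneg {n : ℕ} (x y : Fin n → ℝ) (f : ℝ → ℝ) : 0 ≤ sse x y f :=
  Finset.sum_nonneg fun _ _ => sq_nonneg _

/-- A perfectly inverted (strictly decreasing) relationship, as produced by a miskeyed
item, has antitonic SSE `0`, strictly positive isotonic SSE, and signed coefficient `-1`. -/
theorem signed_coefficient_neg_one_of_inverted (n : ℕ) (hn : 1 ≤ n) (x y : Fin n → ℝ)
    (hSST : 0 < sst y) (g : ℝ → ℝ) (hg : StrictAnti g) (hgy : ∀ r, y r = g (x r))
    (hxnc : ∃ r s, x r ≠ x s) :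
    mseDown x y = 0 ∧ 0 < mseUp x y ∧ signedS2 x y = -1 := by
  have hbddD : BddBelow {e : ℝ | ∃ f : ℝ → ℝ, Antitone f ∧ e = sse x y f} := by
    refine ⟨0, fun e ⟨f, _, he⟩ => ?_⟩
    rw [he]; exact sse_nonneg x y f
  have hbddU : BddBelow {e : ℝ | ∃ f : ℝ → ℝ, Monotone f ∧ e = sse x y f} := by
    refine ⟨0, fun e ⟨f, _, he⟩ => ?_⟩
    rw [he]; exact sse_nonneg x y f
  have hsse_g : sse x y g = 0 := by
    unfold sse
    apply Finset.sum_eq_zero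
    intro r _
    rw [hgy r]; ring
  have hmem : (0 : ℝ) ∈ {e : ℝ | ∃ f : ℝ → ℝ, Antitone f ∧ e = sse x y f} :=
    ⟨g, hg.antitone, hsse_g.symm⟩
  have hDown : mseDown x y = 0 := by
    apply le_antisymm (csInf_le hbddD hmem)
    apply le_csInf ⟨0, hmem⟩
    rintro e ⟨f, _, he⟩
    rw [he]; exact sse_nonneg x y f
  -- get r s with x r < x s
  obtain ⟨r, s, hrs⟩ := hxnc
  have key : ∃ r s : Fin n, x r < x s := by
    rcases lt_or_gt_of_ne hrs with h | h
    · exact ⟨r, s, h⟩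
    · exact ⟨s, r, h⟩
  obtain ⟨a, b, hab⟩ := key
  have hyab : y b < y a := by rw [hgy a, hgy b]; exact hg hab
  set ε : ℝ := (y a - y b) ^ 2 / 2 with hε
  have hεpos : 0 < ε := by
    apply div_pos _ two_pos
    have : y a - y b ≠ 0 := by linarith
    positivity
  have hUp : ε ≤ mseUp x y := by
    have hmemU : sse x y (fun _ => (0:ℝ)) ∈ {e : ℝ | ∃ f : ℝ → ℝ, Monotone f ∧ e = sse x y f} :=
      ⟨fun _ => 0, monotone_const, rfl⟩
    apply le_csInf ⟨_, hmemU⟩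
    rintro e ⟨f, hf, rfl⟩
    have hne : a ≠ b := fun h => absurd (congrArg x h) (ne_of_lt hab)
    have hsub : ({a, b} : Finset (Fin n)) ⊆ Finset.univ := Finset.subset_univ _
    have hsum : ∑ t ∈ ({a, b} : Finset (Fin n)), (y t - f (x t)) ^ 2 ≤ sse x y f := by
      apply Finset.sum_le_sum_of_subset_of_nonneg hsub
      intro i _ _; exact sq_nonneg _
    rw [Finset.sum_pair hne] at hsum
    have hfab : f (x a) ≤ f (x b) := hf hab.le
    nlinarith [sq_nonneg (y a - f (x a) + (y b - f (x b))), sq_nonneg (f (x b) - f (x a)), mul_nonneg (by linarith : (0:ℝ) ≤ y a - y b) (by linarith : (0:ℝ) ≤ f (x b) - f (x a))]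
  have hUpPos : 0 < mseUp x y := lt_of_lt_of_le hεpos hUp
  refine ⟨hDown, hUpPos, ?_⟩
  unfold signedS2
  rw [if_neg (by rw [hDown]; exact not_le.mpr hUpPos), hDown]
  simp
end
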